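/- The set (0,1)^n × Y, with Y = {y ∈ ℝ^n : 1_n^⊤ y = κ}, is forward invariant under the BinPAD dynamics: every solution (x,y) : [0,T̄) → ℝ^n × ℝ^n of ẋ = (|H̃(x)|_m)^{-1} diag((x_i − x_i²)/T)(W̃x + (T/τ)(log(1/x_i − 1))_i + ṽ(y)), ẏ = −αγ L((p_i x_i)_i + Ly), with x(0) ∈ (0,1)^n and 1_n^⊤ y(0) = κ, satisfies x(t) ∈ (0,1)^n and 1_n^⊤ y(t) = κ for all t ∈ [0,T̄); moreover, along such a solution y(t) remains bounded. -/

import Mathlib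

open Matrix

private lemma aux_lt_of_deriv_pos' {f : ℝ → ℝ} {a b : ℝ} (hab : a < b)
    (hc : ContinuousOn f (Set.Icc a b))
    (hd : ∀ t ∈ Set.Ioo a b, ∃ d, 0 < d ∧ HasDerivAt f d t) : f a < f b := by
  have h := strictMonoOn_of_deriv_pos (convex_Icc a b) hc (fun t ht => by
    rw [interior_Icc] at ht
    obtain ⟨d, hd0, hder⟩ := hd t ht
    rwa [hder.deriv])
  exact h (Set.left_mem_Icc.2 hab.le) (Set.right_mem_Icc.2 hab.le) hab

private lemma aux_lt_of_deriv_neg' {f : ℝ → ℝ} {a b : ℝ} (hab : a < b)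
    (hc : ContinuousOn f (Set.Icc a b))
    (hd : ∀ t ∈ Set.Ioo a b, ∃ d, d < 0 ∧ HasDerivAt f d t) : f b < f a := by
  have h := strictAntiOn_of_deriv_neg (convex_Icc a b) hc (fun t ht => by
    rw [interior_Icc] at ht
    obtain ⟨d, hd0, hder⟩ := hd t ht
    rwa [hder.deriv])
  exact h (Set.left_mem_Icc.2 hab.le) (Set.right_mem_Icc.2 hab.le) hab

set_option maxHeartbeats 1000000 in
/-- **Forward invariance of `(0,1)ⁿ × Y` under the BinPAD dynamics**
(Lemma: Forward Invariance of the Open Hypercube (Distributed)). Every solution of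
the BinPAD dynamics with `x(0) ∈ (0,1)ⁿ` and `1ᵀy(0) = κ` satisfies
`x(t) ∈ (0,1)ⁿ` and `1ᵀy(t) = κ` on its interval of existence; moreover `y` remains
bounded. -/
theorem binpad_forward_invariance
    (n : ℕ) (hn : 2 ≤ n)
    (L : Matrix (Fin n) (Fin n) ℝ)
    (hLsymm : L.IsSymm) (hLpsd : L.PosSemidef)
    (hL1 : L *ᵥ (fun _ => (1 : ℝ)) = 0)
    (hLker : ∀ v : Fin n → ℝ, L *ᵥ v = 0 → ∃ c : ℝ, v = fun _ => c)
    (a b p : Fin n → ℝ)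
    (γ T τ m α : ℝ) (hγ : 0 < γ) (hT : 0 < T) (hτ : 0 < τ) (hm : 0 < m) (hα : 0 < α)
    (Pr κ : ℝ)
    (Wtil : Matrix (Fin n) (Fin n) ℝ)
    (hWtil : Wtil = -(Matrix.diagonal fun i => a i + γ * p i ^ 2))
    (vtil : (Fin n → ℝ) → (Fin n → ℝ))
    (hvtil : vtil = fun y i => a i * b i + γ * p i * (Pr / n - (L *ᵥ y) i))
    (hent : (Fin n → ℝ) → Fin n → ℝ)
    (hhent : hent = fun x i => a i + γ * p i ^ 2 + (T / τ) * (1 / (x i - x i ^ 2)))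
    (ptdInv : (Fin n → ℝ) → Fin n → ℝ)
    (hptdInv : ptdInv = fun x i => if m ≤ |hent x i| then |hent x i|⁻¹ else m⁻¹)
    (vfx : (Fin n → ℝ) → (Fin n → ℝ) → (Fin n → ℝ))
    (hvfx : vfx = fun x y i => ptdInv x i * ((x i - x i ^ 2) / T) *
      ((Wtil *ᵥ x) i + (T / τ) * Real.log (1 / x i - 1) + vtil y i))
    (vfy : (Fin n → ℝ) → (Fin n → ℝ) → (Fin n → ℝ))
    (hvfy : vfy = fun x y => -(α * γ) • (L *ᵥ fun i => p i * x i + (L *ᵥ y) i))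
    -- a solution on [0, T̄)
    (Tbar : ℝ) (x y : ℝ → Fin n → ℝ)
    (hsolx : ∀ t ∈ Set.Ico (0 : ℝ) Tbar,
      HasDerivWithinAt x (vfx (x t) (y t)) (Set.Ico (0 : ℝ) Tbar) t)
    (hsoly : ∀ t ∈ Set.Ico (0 : ℝ) Tbar,
      HasDerivWithinAt y (vfy (x t) (y t)) (Set.Ico (0 : ℝ) Tbar) t)
    (hx0 : ∀ i, x 0 i ∈ Set.Ioo (0 : ℝ) 1)
    (hy0 : ∑ i, y 0 i = κ) :
    (∀ t ∈ Set.Ico (0 : ℝ) Tbar, ∀ i, x t i ∈ Set.Ioo (0 : ℝ) 1) ∧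
    (∀ t ∈ Set.Ico (0 : ℝ) Tbar, ∑ i, y t i = κ) ∧
    (∃ C : ℝ, ∀ t ∈ Set.Ico (0 : ℝ) Tbar, ∀ i, |y t i| ≤ C) := by
  set I : Set ℝ := Set.Ico (0 : ℝ) Tbar with hIdef
  have hTτ : 0 < T / τ := div_pos hT hτ
  -- componentwise derivatives
  have hdx : ∀ t ∈ I, ∀ k, HasDerivWithinAt (fun s => x s k) (vfx (x t) (y t) k) I t :=
    fun t ht k => hasDerivWithinAt_pi.1 (hsolx t ht) k
  have hdy : ∀ t ∈ I, ∀ k, HasDerivWithinAt (fun s => y s k) (vfy (x t) (y t) k) I t :=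
    fun t ht k => hasDerivWithinAt_pi.1 (hsoly t ht) k
  have hcx : ∀ k, ContinuousOn (fun s => x s k) I := fun k t ht => (hdx t ht k).continuousWithinAt
  have hcy : ∀ k, ContinuousOn (fun s => y s k) I := fun k t ht => (hdy t ht k).continuousWithinAt
  have hptd : ∀ z : Fin n → ℝ, ∀ i, 0 < ptdInv z i := by
    intro z i
    rw [hptdInv]
    dsimp only
    split
    · rename_i h; exact inv_pos.2 (lt_of_lt_of_le hm h)
    · exact inv_pos.2 hm
  have hnotIoo : ∀ z : ℝ, z ∉ Set.Ioo (0:ℝ) 1 ↔ z ≤ 0 ∨ 1 ≤ z := by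
    intro z
    simp only [Set.mem_Ioo, not_and_or, not_lt]
  -- Part 1
  have part1 : ∀ t ∈ I, ∀ i, x t i ∈ Set.Ioo (0:ℝ) 1 := by
    by_contra hcon
    push_neg at hcon
    obtain ⟨t1, ht1, i1, hi1⟩ := hcon
    have hIcc1 : Set.Icc (0:ℝ) t1 ⊆ I := fun s hs => ⟨hs.1, lt_of_le_of_lt hs.2 ht1.2⟩
    set B : Set ℝ :=
      Set.Icc (0:ℝ) t1 ∩ ⋃ i, ((fun t => x t i) ⁻¹' (Set.Iic 0 ∪ Set.Ici 1)) with hBdef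
    have hBmem : ∀ s, s ∈ B ↔ s ∈ Set.Icc (0:ℝ) t1 ∧ ∃ i, x s i ∉ Set.Ioo (0:ℝ) 1 := by
      intro s
      simp only [hBdef, Set.mem_inter_iff, Set.mem_iUnion, Set.mem_preimage, Set.mem_union,
        Set.mem_Iic, Set.mem_Ici, hnotIoo]
    have hBclosed : IsClosed B := by
      rw [hBdef, Set.inter_iUnion]
      exact isClosed_iUnion_of_finite fun i =>
        ContinuousOn.preimage_isClosed_of_isClosed ((hcx i).mono hIcc1) isClosed_Icc
          (isClosed_Iic.union isClosed_Ici)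
    have hBne : B.Nonempty := by
      refine ⟨t1, (hBmem t1).2 ⟨⟨ht1.1, le_refl _⟩, ⟨i1, hi1⟩⟩⟩
    have hBbd : BddBelow B := ⟨0, fun s hs => ((hBmem s).1 hs).1.1⟩
    set tstar : ℝ := sInf B with htsdef
    have htstarB : tstar ∈ B := hBclosed.csInf_mem hBne hBbd
    obtain ⟨htstarIcc, i, hxi⟩ := (hBmem tstar).1 htstarB
    have htstar_pos : 0 < tstar := by
      rcases lt_or_eq_of_le htstarIcc.1 with h | h
      · exact h
      · exfalso; rw [← h] at hxi; exact hxi (hx0 i)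
    have htstar_lt : tstar < Tbar := lt_of_le_of_lt htstarIcc.2 ht1.2
    have hIcc2 : Set.Icc (0:ℝ) tstar ⊆ I := fun s hs => ⟨hs.1, lt_of_le_of_lt hs.2 htstar_lt⟩
    have hpre : ∀ s, 0 ≤ s → s < tstar → ∀ j, x s j ∈ Set.Ioo (0:ℝ) 1 := by
      intro s hs0 hs j
      by_contra hbad
      have hsB : s ∈ B := (hBmem s).2 ⟨⟨hs0, le_trans hs.le htstarIcc.2⟩, ⟨j, hbad⟩⟩
      exact absurd (csInf_le hBbd hsB) (not_le.2 hs)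
    -- boundary value
    have htendi : Filter.Tendsto (fun s => x s i) (nhdsWithin tstar (Set.Ico 0 tstar))
        (nhds (x tstar i)) :=
      ((hcx i tstar (hIcc2 ⟨htstar_pos.le, le_refl _⟩)).mono
        (fun s hs => hIcc2 ⟨hs.1, hs.2.le⟩)).tendsto
    have hneb : (nhdsWithin tstar (Set.Ico 0 tstar)).NeBot := by
      rw [← mem_closure_iff_nhdsWithin_neBot, closure_Ico htstar_pos.ne]
      exact Set.right_mem_Icc.2 htstar_pos.le
    have hxge : 0 ≤ x tstar i :=
      ge_of_tendsto htendi (Filter.eventually_of_mem self_mem_nhdsWithin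
        (fun s hs => (hpre s hs.1 hs.2 i).1.le))
    have hxle : x tstar i ≤ 1 :=
      le_of_tendsto htendi (Filter.eventually_of_mem self_mem_nhdsWithin
        (fun s hs => (hpre s hs.1 hs.2 i).2.le))
    -- bound on the non-logarithmic terms
    set F : ℝ → ℝ := fun s => (Wtil *ᵥ x s) i + vtil (y s) i with hFdef
    have hFcont : ContinuousOn F (Set.Icc 0 tstar) := by
      rw [hFdef, hvtil]
      simp only [Matrix.mulVec, dotProduct]
      refine ContinuousOn.add ?_ ?_
      · exact continuousOn_finset_sum _ fun k _ => continuousOn_const.mul ((hcx k).mono hIcc2)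
      · refine continuousOn_const.add (continuousOn_const.mul (continuousOn_const.sub ?_))
        exact continuousOn_finset_sum _ fun k _ => continuousOn_const.mul ((hcy k).mono hIcc2)
    obtain ⟨M, hM⟩ := isCompact_Icc.exists_bound_of_continuousOn hFcont
    have hMabs : ∀ s ∈ Set.Icc (0:ℝ) tstar, |F s| ≤ M := by
      intro s hs; rw [← Real.norm_eq_abs]; exact hM s hs
    set c : ℝ := M * τ / T with hcdef
    have hTc : T / τ * c = M := by rw [hcdef]; field_simp
    rcases (hnotIoo _).1 hxi with hx0' | hx1'
    · -- x tstar i = 0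
      have hxeq : x tstar i = 0 := le_antisymm hx0' hxge
      set ε : ℝ := (1 + Real.exp c)⁻¹ with hεdef
      have hεpos : 0 < ε := inv_pos.2 (by positivity)
      have hlog : ∀ z : ℝ, 0 < z → z < ε → M < T / τ * Real.log (1 / z - 1) := by
        intro z hz hzε
        have h1z : 1 + Real.exp c < 1 / z := by
          have hεeq : 1 / ε = 1 + Real.exp c := by rw [hεdef, one_div, inv_inv]
          have h := one_div_lt_one_div_of_lt hz hzε
          rwa [hεeq] at h
        have hpos : 0 < 1 / z - 1 := by
          have := Real.exp_pos c; linarith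
        have : c < Real.log (1 / z - 1) := by
          rw [Real.lt_log_iff_exp_lt hpos]; linarith
        calc M = T / τ * c := hTc.symm
          _ < T / τ * Real.log (1 / z - 1) := by
            exact (mul_lt_mul_iff_right₀ hTτ).2 this
      -- find t0
      have hev : ∀ᶠ s in nhdsWithin tstar (Set.Ico 0 tstar), x s i < ε :=
        htendi.eventually_lt_const (by rw [hxeq]; exact hεpos)
      rw [eventually_nhdsWithin_iff] at hev
      rw [Metric.eventually_nhds_iff] at hev
      obtain ⟨δ, hδ, hδs⟩ := hev
      set t0 : ℝ := max 0 (tstar - δ / 2) with ht0def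
      have ht0lt : t0 < tstar := max_lt htstar_pos (by linarith)
      have ht0ge : 0 ≤ t0 := le_max_left _ _
      have hsmall : ∀ s, t0 ≤ s → s < tstar → x s i < ε := by
        intro s hs0 hs1
        refine hδs ?_ ⟨le_trans ht0ge hs0, hs1⟩
        rw [Real.dist_eq, abs_of_nonpos (by linarith)]
        have h1 : tstar - δ / 2 ≤ t0 := le_max_right _ _
        have h2 : tstar - δ / 2 ≤ s := le_trans h1 hs0
        linarith
      have := aux_lt_of_deriv_pos' (f := fun s => x s i) ht0lt
        (((hcx i).mono hIcc2).mono (fun s hs => ⟨le_trans ht0ge hs.1, hs.2⟩))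
        ?_
      · have h2 : x t0 i < x tstar i := this
        rw [hxeq] at h2
        exact absurd h2 (not_lt.2 (hpre t0 ht0ge ht0lt i).1.le)
      intro t ht
      have htI : t ∈ I := ⟨le_trans ht0ge ht.1.le, lt_trans ht.2 htstar_lt⟩
      have hz : x t i ∈ Set.Ioo (0:ℝ) 1 := hpre t htI.1 ht.2 i
      have hzε : x t i < ε := hsmall t ht.1.le ht.2
      refine ⟨vfx (x t) (y t) i, ?_,
        (hdx t htI i).hasDerivAt (Ico_mem_nhds (lt_of_le_of_lt ht0ge ht.1) htI.2)⟩
      rw [hvfx]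
      dsimp only
      have hbr : 0 < (Wtil *ᵥ x t) i + T / τ * Real.log (1 / x t i - 1) + vtil (y t) i := by
        have h1 : -M ≤ F t := neg_le_of_abs_le (hMabs t ⟨htI.1, ht.2.le⟩)
        have h2 : M < T / τ * Real.log (1 / x t i - 1) := hlog _ hz.1 hzε
        have h1' : -M ≤ (Wtil *ᵥ x t) i + vtil (y t) i := h1
        linarith
      have hzz : 0 < (x t i - x t i ^ 2) / T :=
        div_pos (by nlinarith [hz.1, hz.2]) hT
      exact mul_pos (mul_pos (hptd _ _) hzz) hbr
    · -- x tstar i = 1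
      have hxeq : x tstar i = 1 := le_antisymm hxle hx1'
      set θ : ℝ := (1 + Real.exp (-c))⁻¹ with hθdef
      have hθpos : 0 < θ := inv_pos.2 (by positivity)
      have hθlt1 : θ < 1 := by
        rw [hθdef]
        rw [inv_lt_one_iff₀]
        right; linarith [Real.exp_pos (-c)]
      have hlog : ∀ z : ℝ, θ < z → z < 1 → T / τ * Real.log (1 / z - 1) < -M := by
        intro z hz hz1
        have hzpos : 0 < z := lt_trans hθpos hz
        have h1z : 1 / z < 1 + Real.exp (-c) := by
          have hθeq : 1 / θ = 1 + Real.exp (-c) := by rw [hθdef, one_div, inv_inv]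
          have h := one_div_lt_one_div_of_lt hθpos hz
          rwa [hθeq] at h
        have hpos : 0 < 1 / z - 1 := by
          have : 1 < 1 / z := one_lt_one_div hzpos hz1
          linarith
        have : Real.log (1 / z - 1) < -c := by
          rw [Real.log_lt_iff_lt_exp hpos]; linarith
        have h3 : T / τ * Real.log (1 / z - 1) < T / τ * (-c) := (mul_lt_mul_iff_right₀ hTτ).2 this
        have : T / τ * (-c) = -M := by rw [mul_neg, hTc]
        linarith
      have hev : ∀ᶠ s in nhdsWithin tstar (Set.Ico 0 tstar), θ < x s i :=
        htendi.eventually_const_lt (by rw [hxeq]; exact hθlt1)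
      rw [eventually_nhdsWithin_iff] at hev
      rw [Metric.eventually_nhds_iff] at hev
      obtain ⟨δ, hδ, hδs⟩ := hev
      set t0 : ℝ := max 0 (tstar - δ / 2) with ht0def
      have ht0lt : t0 < tstar := max_lt htstar_pos (by linarith)
      have ht0ge : 0 ≤ t0 := le_max_left _ _
      have hsmall : ∀ s, t0 ≤ s → s < tstar → θ < x s i := by
        intro s hs0 hs1
        refine hδs ?_ ⟨le_trans ht0ge hs0, hs1⟩
        rw [Real.dist_eq, abs_of_nonpos (by linarith)]
        have h1 : tstar - δ / 2 ≤ t0 := le_max_right _ _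
        have h2 : tstar - δ / 2 ≤ s := le_trans h1 hs0
        linarith
      have := aux_lt_of_deriv_neg' (f := fun s => x s i) ht0lt
        (((hcx i).mono hIcc2).mono (fun s hs => ⟨le_trans ht0ge hs.1, hs.2⟩))
        ?_
      · have h2 : x tstar i < x t0 i := this
        rw [hxeq] at h2
        exact absurd h2 (not_lt.2 (hpre t0 ht0ge ht0lt i).2.le)
      intro t ht
      have htI : t ∈ I := ⟨le_trans ht0ge ht.1.le, lt_trans ht.2 htstar_lt⟩
      have hz : x t i ∈ Set.Ioo (0:ℝ) 1 := hpre t htI.1 ht.2 i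
      have hzθ : θ < x t i := hsmall t ht.1.le ht.2
      refine ⟨vfx (x t) (y t) i, ?_,
        (hdx t htI i).hasDerivAt (Ico_mem_nhds (lt_of_le_of_lt ht0ge ht.1) htI.2)⟩
      rw [hvfx]
      dsimp only
      have hbr : (Wtil *ᵥ x t) i + T / τ * Real.log (1 / x t i - 1) + vtil (y t) i < 0 := by
        have h1 : F t ≤ M := le_of_abs_le (hMabs t ⟨htI.1, ht.2.le⟩)
        have h2 : T / τ * Real.log (1 / x t i - 1) < -M := hlog _ hzθ hz.2
        have h1' : (Wtil *ᵥ x t) i + vtil (y t) i ≤ M := h1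
        linarith
      have hzz : 0 < (x t i - x t i ^ 2) / T :=
        div_pos (by nlinarith [hz.1, hz.2]) hT
      have hpp : 0 < ptdInv (x t) i * ((x t i - x t i ^ 2) / T) := mul_pos (hptd _ _) hzz
      exact mul_neg_of_pos_of_neg hpp hbr
  -- Part 2
  have hn0 : (0:ℝ) < (n:ℝ) := by
    have : 0 < n := lt_of_lt_of_le (by norm_num) hn
    exact_mod_cast this
  have hsum0 : ∀ t ∈ I, ∑ i, vfy (x t) (y t) i = 0 := by
    intro t ht
    rw [hvfy]
    dsimp only
    simp only [Pi.smul_apply, smul_eq_mul]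
    rw [← Finset.mul_sum]
    have h2 : ∑ i, (L *ᵥ fun j => p j * x t j + (L *ᵥ y t) j) i = 0 := by
      have e1 : (fun _ => (1:ℝ)) ⬝ᵥ (L *ᵥ fun j => p j * x t j + (L *ᵥ y t) j) = 0 := by
        rw [Matrix.dotProduct_mulVec, ← Matrix.mulVec_transpose, hLsymm.eq, hL1,
          zero_dotProduct]
      simpa [dotProduct] using e1
    rw [h2, mul_zero]
  have hgderiv : ∀ t ∈ I, HasDerivWithinAt (fun s => ∑ i, y s i) 0 I t := by
    intro t ht
    have h := HasDerivWithinAt.fun_sum (fun i (_ : i ∈ Finset.univ) => hdy t ht i)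
    rwa [hsum0 t ht] at h
  have part2 : ∀ t ∈ I, ∑ i, y t i = κ := by
    intro t ht
    rcases eq_or_lt_of_le ht.1 with h0 | h0
    · rw [← h0]; exact hy0
    have hsub : Set.Icc (0:ℝ) t ⊆ I := fun s hs => ⟨hs.1, lt_of_le_of_lt hs.2 ht.2⟩
    have hconst := constant_of_has_deriv_right_zero (f := fun s => ∑ i, y s i) (a := 0) (b := t)
      ((continuousOn_finset_sum _ fun i _ => hcy i).mono hsub)
      (fun s hs => by
        have hsI : s ∈ I := ⟨hs.1, lt_trans hs.2 ht.2⟩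
        refine (hgderiv s hsI).mono_of_mem_nhdsWithin ?_
        have hIoo : Set.Ioo (-1:ℝ) Tbar ∈ nhds s := Ioo_mem_nhds (by linarith [hs.1]) hsI.2
        refine Filter.mem_of_superset
          (Filter.inter_mem (mem_nhdsWithin_of_mem_nhds hIoo) self_mem_nhdsWithin) ?_
        rintro u ⟨hu1, hu2⟩
        exact ⟨le_trans hs.1 hu2, hu1.2⟩)
    have h5 : ∑ i, y t i = ∑ i, y 0 i := hconst t (Set.right_mem_Icc.2 ht.1)
    rw [h5]
    exact hy0
  -- Part 3 : spectral gap
  set S : Set (Fin n → ℝ) := {u | ∑ i, u i ^ 2 = 1 ∧ ∑ i, u i = 0} with hSdef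
  have hScl : IsClosed S := by
    have h1 : Continuous fun u : Fin n → ℝ => ∑ i, u i ^ 2 :=
      continuous_finset_sum _ fun i _ => (continuous_apply i).pow 2
    have h2 : Continuous fun u : Fin n → ℝ => ∑ i, u i :=
      continuous_finset_sum _ fun i _ => continuous_apply i
    have : S = (fun u : Fin n → ℝ => ∑ i, u i ^ 2) ⁻¹' {1} ∩
        (fun u : Fin n → ℝ => ∑ i, u i) ⁻¹' {0} := by
      ext u; simp [hSdef]
    rw [this]
    exact (IsClosed.preimage h1 isClosed_singleton).inter (IsClosed.preimage h2 isClosed_singleton)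
  have hSbd : Bornology.IsBounded S := by
    apply Bornology.IsBounded.subset (Metric.isBounded_closedBall (x := (0 : Fin n → ℝ)) (r := 1))
    intro u hu
    rw [Metric.mem_closedBall, dist_zero_right]
    rw [pi_norm_le_iff_of_nonneg zero_le_one]
    intro i
    have h1 : u i ^ 2 ≤ 1 := by
      rw [← hu.1]
      exact Finset.single_le_sum (fun j _ => sq_nonneg (u j)) (Finset.mem_univ i)
    rw [Real.norm_eq_abs]
    nlinarith [abs_nonneg (u i), sq_abs (u i)]
  have hScpt : IsCompact S := Metric.isCompact_of_isClosed_isBounded hScl hSbd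
  have hSne : S.Nonempty := by
    set i0 : Fin n := ⟨0, by omega⟩ with hi0
    set i1 : Fin n := ⟨1, by omega⟩ with hi1
    have hne : i0 ≠ i1 := by simp [hi0, hi1, Fin.ext_iff]
    set sq2 : ℝ := Real.sqrt (1/2) with hsq2
    set u0 : Fin n → ℝ := fun j => if j = i0 then sq2 else if j = i1 then -sq2 else 0 with hu0
    have hvi0 : u0 i0 = sq2 := by simp [hu0]
    have hvi1 : u0 i1 = -sq2 := by simp [hu0, hne.symm]
    have hvz : ∀ j, j ≠ i0 → j ≠ i1 → u0 j = 0 := by intro j h1 h2; simp [hu0, h1, h2]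
    have hzero : ∀ j ∈ Finset.univ, j ∉ ({i0, i1} : Finset (Fin n)) → u0 j = 0 := by
      intro j _ hj
      simp only [Finset.mem_insert, Finset.mem_singleton] at hj
      push_neg at hj
      exact hvz j hj.1 hj.2
    have hzero2 : ∀ j ∈ Finset.univ, j ∉ ({i0, i1} : Finset (Fin n)) → u0 j ^ 2 = 0 :=
      fun j hj h2 => by rw [hzero j hj h2]; ring
    refine ⟨u0, ?_, ?_⟩
    · rw [← Finset.sum_subset (Finset.subset_univ _) hzero2, Finset.sum_pair hne, hvi0, hvi1]
      have hsq : sq2 ^ 2 = 1/2 := Real.sq_sqrt (by norm_num)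
      linear_combination 2 * hsq
    · rw [← Finset.sum_subset (Finset.subset_univ _) hzero, Finset.sum_pair hne, hvi0, hvi1]
      ring
  set g2 : (Fin n → ℝ) → ℝ := fun u => ∑ j, ((L *ᵥ u) j) ^ 2 with hg2
  have hg2cont : Continuous g2 := by
    apply continuous_finset_sum
    intro j _
    have hc : Continuous fun u : Fin n → ℝ => (L *ᵥ u) j := by
      simp only [Matrix.mulVec, dotProduct]
      exact continuous_finset_sum _ fun k _ => continuous_const.mul (continuous_apply k)
    exact hc.pow 2
  obtain ⟨u0m, hu0mS, hu0min⟩ := hScpt.exists_isMinOn hSne hg2cont.continuousOn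
  set lsq : ℝ := g2 u0m with hlsq
  have hlsq_nn : 0 ≤ lsq := Finset.sum_nonneg fun j _ => sq_nonneg _
  have hlsq_pos : 0 < lsq := by
    rcases lt_or_eq_of_le hlsq_nn with h | h
    · exact h
    · exfalso
      have hz : L *ᵥ u0m = 0 := by
        funext j
        have h1 : ((L *ᵥ u0m) j) ^ 2 = 0 :=
          (Finset.sum_eq_zero_iff_of_nonneg (fun j _ => sq_nonneg ((L *ᵥ u0m) j))).1 h.symm j
            (Finset.mem_univ j)
        have := pow_eq_zero_iff (n := 2) (by norm_num) |>.1 h1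
        exact this
      obtain ⟨cc, hcc⟩ := hLker _ hz
      have hcc0 : cc = 0 := by
        have h2 : (n:ℝ) * cc = 0 := by
          have h3 := hu0mS.2
          rw [hcc] at h3
          simpa [Finset.sum_const, Finset.card_univ, nsmul_eq_mul] using h3
        rcases mul_eq_zero.1 h2 with h' | h'
        · exact absurd h' (ne_of_gt hn0)
        · exact h'
      have h4 := hu0mS.1
      rw [hcc, hcc0] at h4
      simp at h4
  have hspec : ∀ v : Fin n → ℝ, ∑ i, v i = 0 →
      lsq * ∑ i, v i ^ 2 ≤ ∑ j, ((L *ᵥ v) j) ^ 2 := by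
    intro v hv
    by_cases hv2 : ∑ i, v i ^ 2 = 0
    · rw [hv2, mul_zero]
      exact Finset.sum_nonneg fun j _ => sq_nonneg _
    · have hv2pos : 0 < ∑ i, v i ^ 2 :=
        lt_of_le_of_ne (Finset.sum_nonneg fun i _ => sq_nonneg _) (Ne.symm hv2)
      set r : ℝ := Real.sqrt (∑ i, v i ^ 2) with hr
      have hrpos : 0 < r := Real.sqrt_pos.2 hv2pos
      have hr2 : r ^ 2 = ∑ i, v i ^ 2 := Real.sq_sqrt hv2pos.le
      have humem : (r⁻¹ • v) ∈ S := by
        constructor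
        · have h1 : ∑ i, (r⁻¹ • v) i ^ 2 = (r ^ 2)⁻¹ * ∑ i, v i ^ 2 := by
            rw [Finset.mul_sum]
            refine Finset.sum_congr rfl fun i _ => ?_
            rw [Pi.smul_apply, smul_eq_mul, mul_pow, inv_pow]
          rw [h1, hr2, inv_mul_cancel₀ hv2]
        · have h1 : ∑ i, (r⁻¹ • v) i = r⁻¹ * ∑ i, v i := by
            rw [Finset.mul_sum]
            refine Finset.sum_congr rfl fun i _ => ?_
            rw [Pi.smul_apply, smul_eq_mul]
          rw [h1, hv, mul_zero]
      have hmin := isMinOn_iff.1 hu0min _ humem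
      have hg2u : g2 (r⁻¹ • v) = (r ^ 2)⁻¹ * ∑ j, ((L *ᵥ v) j) ^ 2 := by
        rw [hg2]
        dsimp only
        rw [Matrix.mulVec_smul, Finset.mul_sum]
        refine Finset.sum_congr rfl fun j _ => ?_
        rw [Pi.smul_apply, smul_eq_mul, mul_pow, inv_pow]
      rw [hg2u] at hmin
      have hr2pos : 0 < r ^ 2 := by positivity
      calc lsq * ∑ i, v i ^ 2 = lsq * r ^ 2 := by rw [hr2]
        _ ≤ ((r ^ 2)⁻¹ * ∑ j, ((L *ᵥ v) j) ^ 2) * r ^ 2 :=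
            mul_le_mul_of_nonneg_right hmin hr2pos.le
        _ = ∑ j, ((L *ᵥ v) j) ^ 2 := by field_simp
  -- Lyapunov function
  set V : ℝ → ℝ := fun t => ∑ i, (y t i - κ / n) ^ 2 with hV
  have hVcont : ContinuousOn V I :=
    continuousOn_finset_sum _ fun i _ => ((hcy i).sub continuousOn_const).pow 2
  set Cp : ℝ := ∑ j, p j ^ 2 with hCp
  have hCpnn : 0 ≤ Cp := Finset.sum_nonneg fun j _ => sq_nonneg _
  set K : ℝ := max (V 0) (Cp / lsq) with hK
  have hVderiv : ∀ t ∈ I, HasDerivWithinAt V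
      (∑ i, 2 * (y t i - κ / n) * vfy (x t) (y t) i) I t := by
    intro t ht
    refine HasDerivWithinAt.fun_sum fun i _ => ?_
    have h := ((hdy t ht i).sub_const (κ / n)).fun_pow 2
    norm_num at h
    convert h using 1
  have hVneg : ∀ t ∈ I, K < V t →
      (∑ i, 2 * (y t i - κ / n) * vfy (x t) (y t) i) < 0 := by
    intro t ht hKV
    set w : Fin n → ℝ := fun i => y t i - κ / n with hw
    have hwsum : ∑ i, w i = 0 := by
      have h1 : ∑ i, w i = (∑ i, y t i) - (n : ℝ) * (κ / n) := by
        simp only [hw]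
        rw [Finset.sum_sub_distrib, Finset.sum_const, Finset.card_univ, Fintype.card_fin,
          nsmul_eq_mul]
      rw [h1, part2 t ht]
      field_simp
      ring
    have hyw : (L *ᵥ y t) = L *ᵥ w := by
      have h1 : y t = w + (κ / n) • (fun _ => (1:ℝ)) := by
        funext i
        simp only [hw, Pi.add_apply, Pi.smul_apply, smul_eq_mul, mul_one]
        ring
      rw [h1, Matrix.mulVec_add, Matrix.mulVec_smul, hL1]
      simp
    set q : Fin n → ℝ := fun i => p i * x t i + (L *ᵥ y t) i with hq
    set A : ℝ := ∑ j, ((L *ᵥ w) j) ^ 2 with hA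
    set P : ℝ := ∑ j, ((L *ᵥ w) j) * (p j * x t j) with hP
    have hvfy_i : ∀ i, vfy (x t) (y t) i = -(α * γ) * (L *ᵥ q) i := by
      intro i
      rw [hvfy]
      simp only [Pi.smul_apply, smul_eq_mul]
      rfl
    have hdot : ∑ i, w i * (L *ᵥ q) i = P + A := by
      have e1 : w ⬝ᵥ (L *ᵥ q) = (L *ᵥ w) ⬝ᵥ q := by
        rw [Matrix.dotProduct_mulVec, ← Matrix.mulVec_transpose, hLsymm.eq]
      have e2 : (L *ᵥ w) ⬝ᵥ q = P + A := by
        rw [dotProduct, hP, hA, ← Finset.sum_add_distrib]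
        refine Finset.sum_congr rfl fun j _ => ?_
        simp only [hq]
        rw [hyw]
        ring
      exact (e1.trans e2)
    have hsum_expr : ∑ i, 2 * (y t i - κ / n) * vfy (x t) (y t) i
        = -(2 * (α * γ)) * (P + A) := by
      rw [← hdot, Finset.mul_sum]
      refine Finset.sum_congr rfl fun i _ => ?_
      rw [hvfy_i i]
      simp only [hw]
      ring
    have hVt : V t = ∑ i, w i ^ 2 := rfl
    have hAlow : lsq * V t ≤ A := by rw [hVt]; exact hspec w hwsum
    have hKge : Cp / lsq ≤ K := le_max_right _ _
    have hCpA : Cp < A := by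
      have h1 : Cp / lsq < V t := lt_of_le_of_lt hKge hKV
      rw [div_lt_iff₀ hlsq_pos] at h1
      nlinarith [hAlow]
    have hApos : 0 < A := lt_of_le_of_lt hCpnn hCpA
    have hCS : P ^ 2 ≤ A * Cp := by
      have h1 := Finset.sum_mul_sq_le_sq_mul_sq Finset.univ (fun j => (L *ᵥ w) j)
        (fun j => p j * x t j)
      have h2 : ∑ j, (p j * x t j) ^ 2 ≤ Cp := by
        rw [hCp]
        refine Finset.sum_le_sum fun j _ => ?_
        have hx := part1 t ht j
        have hx2 : x t j ^ 2 ≤ 1 := by nlinarith [hx.1, hx.2]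
        calc (p j * x t j) ^ 2 = p j ^ 2 * x t j ^ 2 := by ring
          _ ≤ p j ^ 2 * 1 := mul_le_mul_of_nonneg_left hx2 (sq_nonneg _)
          _ = p j ^ 2 := mul_one _
      calc P ^ 2 ≤ A * ∑ j, (p j * x t j) ^ 2 := h1
        _ ≤ A * Cp := mul_le_mul_of_nonneg_left h2 hApos.le
    have hPA : 0 < P + A := by
      by_contra hcontra
      push_neg at hcontra
      have h3 : A ≤ -P := by linarith
      have h4 : A * A ≤ (-P) * (-P) := mul_self_le_mul_self hApos.le h3
      nlinarith [hCS, hCpA, hApos]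
    rw [hsum_expr]
    have hpos2 : 0 < 2 * (α * γ) := by positivity
    exact mul_neg_of_neg_of_pos (by linarith) hPA
  have hVle : ∀ t ∈ I, V t ≤ K := by
    by_contra hcon
    push_neg at hcon
    obtain ⟨t1, ht1, hVt1⟩ := hcon
    have hIcc1 : Set.Icc (0:ℝ) t1 ⊆ I := fun s hs => ⟨hs.1, lt_of_le_of_lt hs.2 ht1.2⟩
    set A' : Set ℝ := Set.Icc (0:ℝ) t1 ∩ V ⁻¹' (Set.Iic K) with hA'
    have hA'cl : IsClosed A' :=
      ContinuousOn.preimage_isClosed_of_isClosed (hVcont.mono hIcc1) isClosed_Icc isClosed_Iic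
    have hA'ne : A'.Nonempty :=
      ⟨0, ⟨le_refl 0, ht1.1⟩, Set.mem_preimage.2 (Set.mem_Iic.2 (le_max_left _ _))⟩
    have hA'bd : BddAbove A' := ⟨t1, fun s hs => hs.1.2⟩
    set s0 : ℝ := sSup A' with hs0
    have hs0A : s0 ∈ A' := hA'cl.csSup_mem hA'ne hA'bd
    have hs0t1 : s0 < t1 := by
      rcases lt_or_eq_of_le hs0A.1.2 with h | h
      · exact h
      · exfalso; rw [h] at hs0A; exact absurd hs0A.2 (not_le.2 hVt1)
    have hmid : ∀ u, s0 < u → u ≤ t1 → K < V u := by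
      intro u hu1 hu2
      by_contra hcontra
      push_neg at hcontra
      have huA : u ∈ A' := ⟨⟨le_trans hs0A.1.1 hu1.le, hu2⟩, hcontra⟩
      exact absurd (le_csSup hA'bd huA) (not_le.2 hu1)
    have hfin := aux_lt_of_deriv_neg' (f := V) hs0t1
      (hVcont.mono fun u hu => ⟨le_trans hs0A.1.1 hu.1, lt_of_le_of_lt hu.2 ht1.2⟩)
      (fun u hu => by
        have huI : u ∈ I := ⟨le_trans hs0A.1.1 hu.1.le, lt_trans hu.2 ht1.2⟩
        refine ⟨_, hVneg u huI (hmid u hu.1 hu.2.le), ?_⟩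
        exact (hVderiv u huI).hasDerivAt
          (Ico_mem_nhds (lt_of_le_of_lt hs0A.1.1 hu.1) huI.2))
    have : V t1 < K := lt_of_lt_of_le hfin hs0A.2
    exact absurd hVt1 (not_lt.2 this.le)
  refine ⟨part1, part2, ⟨Real.sqrt K + |κ| / n, ?_⟩⟩
  intro t ht i
  have h1 : (y t i - κ / n) ^ 2 ≤ V t := by
    have h1' : (y t i - κ / n) ^ 2 ≤ ∑ j, (y t j - κ / n) ^ 2 :=
      Finset.single_le_sum (fun j _ => sq_nonneg ((y t j - κ / n))) (Finset.mem_univ i)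
    exact h1'
  have h2 : V t ≤ K := hVle t ht
  have h3 : |y t i - κ / n| ≤ Real.sqrt K := by
    rw [← Real.sqrt_sq_eq_abs]
    exact Real.sqrt_le_sqrt (le_trans h1 h2)
  have h4 : |κ / (n:ℝ)| = |κ| / n := by
    rw [abs_div]
    congr 1
    exact abs_of_nonneg hn0.le
  calc |y t i| = |(y t i - κ / n) + κ / n| := by congr 1; ring
    _ ≤ |y t i - κ / n| + |κ / (n:ℝ)| := abs_add_le _ _
    _ ≤ Real.sqrt K + |κ| / n := by rw [h4]; exact add_le_add_left h3 _
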